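/- Let s₂ be the root of z u² + (z² − z − 1)u + 1 = 0 given by the minus sign of the quadratic formula, and set F(1) = 1/(1 − z s₂). Then 1 − s₂ + z² s₂ F(1) = 0; that is, u = s₂ is also a root of the numerator 1 − u + z² u F(1), so the factor (u − s₂) cancels in F(u) = (1 − u + z² u F(1))/(z(u − s₁)(u − s₂)). -/

import Mathlib

/-- with s₂ the minus-sign root of z u² + (z² − z − 1)u + 1 = 0 and
F(1) = 1/(1 − z s₂), the numerator 1 − u + z² u F(1) vanishes at u = s₂. -/
theorem stmt8 (z s₂ F1 : ℝ) (hz : z ≠ 0) (hzs : z * s₂ ≠ 1)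
    (hdisc : 0 ≤ z^4 - 2*z^3 - z^2 - 2*z + 1)
    (hs₂ : s₂ = (1 + z - z^2 - Real.sqrt (z^4 - 2*z^3 - z^2 - 2*z + 1)) / (2*z))
    (hF1 : F1 = 1 / (1 - z * s₂)) :
    1 - s₂ + z^2 * s₂ * F1 = 0 := by
  have hsq := Real.sq_sqrt hdisc
  have hquad : z * s₂^2 + (z^2 - z - 1) * s₂ + 1 = 0 := by
    have h2z : (2*z) ≠ 0 := by simpa using hz
    rw [hs₂]
    field_simp
    ring_nf at hsq ⊢
    nlinarith [hsq]
  have h1 : 1 - z * s₂ ≠ 0 := fun h => hzs (by linarith)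
  rw [hF1]
  have h1' : 1 - s₂ * z ≠ 0 := by rwa [mul_comm]
  field_simp
  nlinarith [hquad]
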